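/- Let 0 < p < 1, set q = 1−p, and define Λ*(x) = x·log(x/p) + (1−x)·log((1−x)/q) for x ∈ [0,1] (with Λ*(0) = log(1/q) and Λ*(1) = log(1/p), interpreting 0·log 0 = 0). Let n₁, n₂ be positive integers and let X, Y be independent random variables with X ~ Bin(n₁, p) and Y/2 ~ Bin(n₂, p). Then for all 0 ≤ x ≤ p, Pr(X + Y ≤ (n₁ + 2n₂)x) ≤ exp(−½(n₁ + 2n₂)·Λ*(x)). -/

import Mathlib

open MeasureTheory ProbabilityTheory Finset

lemma binomSum (n : ℕ) (p q c : ℝ) :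
    ∑ i ∈ Finset.range (n + 1),
      (n.choose i : ℝ) * p ^ i * q ^ (n - i) * c ^ i = (p * c + q) ^ n := by
  rw [add_pow]
  refine Finset.sum_congr rfl fun i hi => ?_
  rw [mul_pow]; ring

lemma chernoff_aux {Ω : Type*} [MeasurableSpace Ω] (μ : Measure Ω)
    [IsProbabilityMeasure μ] (p : ℝ) (hp0 : 0 < p) (hp1 : p < 1)
    (n₁ n₂ : ℕ)
    (X Z : Ω → ℕ) (hX : Measurable X) (hZ : Measurable Z)
    (hind : IndepFun X Z μ)
    (hXdist : ∀ i : ℕ, μ {ω | X ω = i} =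
      ENNReal.ofReal ((n₁.choose i : ℝ) * p ^ i * (1 - p) ^ (n₁ - i)))
    (hZdist : ∀ i : ℕ, μ {ω | Z ω = i} =
      ENNReal.ofReal ((n₂.choose i : ℝ) * p ^ i * (1 - p) ^ (n₂ - i)))
    (c t : ℝ) (ht : t ≤ 0) :
    (μ {ω | ((X ω : ℝ) + 2 * (Z ω : ℝ)) ≤ c}).toReal ≤
      Real.exp (-(t * c)) * (p * Real.exp t + (1 - p)) ^ n₁ *
        (p * Real.exp (2 * t) + (1 - p)) ^ n₂ := by
  set q : ℝ := 1 - p with hqdef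
  have hq0 : 0 < q := by simp [hqdef]; linarith
  set a : ℕ → ℝ := fun i => (n₁.choose i : ℝ) * p ^ i * q ^ (n₁ - i) with hadef
  set b : ℕ → ℝ := fun j => (n₂.choose j : ℝ) * p ^ j * q ^ (n₂ - j) with hbdef
  have ha : ∀ i, 0 ≤ a i := fun i => by positivity
  have hb : ∀ j, 0 ≤ b j := fun j => by positivity
  have hXnull : μ {ω | n₁ < X ω} = 0 := by
    have hsub : {ω | n₁ < X ω} ⊆ ⋃ i : ℕ, {ω | X ω = n₁ + 1 + i} := by
      intro ω hω
      simp only [Set.mem_setOf_eq] at hω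
      exact Set.mem_iUnion.2 ⟨X ω - (n₁ + 1), by simp only [Set.mem_setOf_eq]; omega⟩
    refine measure_mono_null hsub (measure_iUnion_null fun i => ?_)
    rw [hXdist]
    rw [Nat.choose_eq_zero_of_lt (by omega)]
    simp
  have hZnull : μ {ω | n₂ < Z ω} = 0 := by
    have hsub : {ω | n₂ < Z ω} ⊆ ⋃ i : ℕ, {ω | Z ω = n₂ + 1 + i} := by
      intro ω hω
      simp only [Set.mem_setOf_eq] at hω
      exact Set.mem_iUnion.2 ⟨Z ω - (n₂ + 1), by simp only [Set.mem_setOf_eq]; omega⟩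
    refine measure_mono_null hsub (measure_iUnion_null fun i => ?_)
    rw [hZdist]
    rw [Nat.choose_eq_zero_of_lt (by omega)]
    simp
  set s : Finset (ℕ × ℕ) :=
    (Finset.range (n₁ + 1) ×ˢ Finset.range (n₂ + 1)).filter
      (fun ij => (ij.1 : ℝ) + 2 * ij.2 ≤ c) with hsdef
  set A : ℕ × ℕ → Set Ω := fun ij => {ω | X ω = ij.1 ∧ Z ω = ij.2} with hAdef
  have hcover : {ω | ((X ω : ℝ) + 2 * (Z ω : ℝ)) ≤ c} ⊆
      (⋃ ij ∈ s, A ij) ∪ ({ω | n₁ < X ω} ∪ {ω | n₂ < Z ω}) := by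
    intro ω hω
    by_cases hcase : X ω ≤ n₁ ∧ Z ω ≤ n₂
    · left
      refine Set.mem_iUnion₂.2 ⟨(X ω, Z ω), ?_, ⟨rfl, rfl⟩⟩
      simp only [hsdef, Finset.mem_filter, Finset.mem_product, Finset.mem_range]
      exact ⟨⟨by omega, by omega⟩, hω⟩
    · right
      rcases not_and_or.1 hcase with h | h
      · exact Or.inl (by simpa using Nat.lt_of_not_le (by simpa using h))
      · exact Or.inr (by simpa using Nat.lt_of_not_le (by simpa using h))
  have hA : ∀ ij : ℕ × ℕ, μ (A ij) = ENNReal.ofReal (a ij.1 * b ij.2) := by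
    rintro ⟨i, j⟩
    have h := hind.measure_inter_preimage_eq_mul {i} {j}
      (measurableSet_singleton i) (measurableSet_singleton j)
    have hset : A (i, j) = X ⁻¹' {i} ∩ Z ⁻¹' {j} := rfl
    rw [hset, h,
      show X ⁻¹' {i} = {ω | X ω = i} from rfl,
      show Z ⁻¹' {j} = {ω | Z ω = j} from rfl,
      hXdist, hZdist, ← ENNReal.ofReal_mul (ha i)]
  have hmeasle : μ {ω | ((X ω : ℝ) + 2 * (Z ω : ℝ)) ≤ c} ≤
      ENNReal.ofReal (∑ ij ∈ s, a ij.1 * b ij.2) := by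
    calc μ {ω | ((X ω : ℝ) + 2 * (Z ω : ℝ)) ≤ c}
        ≤ μ ((⋃ ij ∈ s, A ij) ∪ ({ω | n₁ < X ω} ∪ {ω | n₂ < Z ω})) := measure_mono hcover
      _ ≤ μ (⋃ ij ∈ s, A ij) + μ ({ω | n₁ < X ω} ∪ {ω | n₂ < Z ω}) := measure_union_le _ _
      _ = μ (⋃ ij ∈ s, A ij) := by rw [measure_union_null hXnull hZnull, add_zero]
      _ ≤ ∑ ij ∈ s, μ (A ij) := measure_biUnion_finset_le s A
      _ = ∑ ij ∈ s, ENNReal.ofReal (a ij.1 * b ij.2) := by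
          exact Finset.sum_congr rfl fun ij _ => hA ij
      _ = ENNReal.ofReal (∑ ij ∈ s, a ij.1 * b ij.2) :=
          (ENNReal.ofReal_sum_of_nonneg fun ij _ =>
            mul_nonneg (ha ij.1) (hb ij.2)).symm
  have hexp1 : 0 < p * Real.exp t + q := by positivity
  have hexp2 : 0 < p * Real.exp (2 * t) + q := by positivity
  refine ENNReal.toReal_le_of_le_ofReal (by positivity) ?_
  refine hmeasle.trans (ENNReal.ofReal_le_ofReal ?_)
  -- real arithmetic
  have hstep1 : ∑ ij ∈ s, a ij.1 * b ij.2 ≤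
      ∑ ij ∈ Finset.range (n₁ + 1) ×ˢ Finset.range (n₂ + 1),
        Real.exp (-(t * c)) * ((a ij.1 * Real.exp t ^ ij.1) *
          (b ij.2 * Real.exp (2 * t) ^ ij.2)) := by
    have h1 : ∀ ij ∈ s, a ij.1 * b ij.2 ≤
        Real.exp (-(t * c)) * ((a ij.1 * Real.exp t ^ ij.1) *
          (b ij.2 * Real.exp (2 * t) ^ ij.2)) := by
      rintro ⟨i, j⟩ hij
      simp only [hsdef, Finset.mem_filter] at hij
      have hcond : (i : ℝ) + 2 * j ≤ c := hij.2
      have hfac : Real.exp (-(t * c)) * (Real.exp t ^ i * Real.exp (2 * t) ^ j)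
          = Real.exp (t * ((i : ℝ) + 2 * j) - t * c) := by
        rw [← Real.exp_nat_mul, ← Real.exp_nat_mul, ← Real.exp_add, ← Real.exp_add]
        ring_nf
      have h1le : (1 : ℝ) ≤ Real.exp (t * ((i : ℝ) + 2 * j) - t * c) := by
        rw [Real.one_le_exp_iff]
        have := mul_le_mul_of_nonpos_left hcond ht
        linarith
      calc a i * b j = 1 * (a i * b j) := by ring
        _ ≤ Real.exp (t * ((i : ℝ) + 2 * j) - t * c) * (a i * b j) :=
            mul_le_mul_of_nonneg_right h1le (mul_nonneg (ha i) (hb j))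
        _ = Real.exp (-(t * c)) * ((a i * Real.exp t ^ i) *
              (b j * Real.exp (2 * t) ^ j)) := by rw [← hfac]; ring
    refine (Finset.sum_le_sum h1).trans ?_
    refine Finset.sum_le_sum_of_subset_of_nonneg (Finset.filter_subset _ _) ?_
    intro ij _ _
    have := ha ij.1; have := hb ij.2
    have h1 := Real.exp_nonneg t
    positivity
  refine hstep1.trans_eq ?_
  rw [Finset.sum_product]
  have : ∀ i ∈ Finset.range (n₁ + 1),
      ∑ j ∈ Finset.range (n₂ + 1),
        Real.exp (-(t * c)) * ((a i * Real.exp t ^ i) * (b j * Real.exp (2 * t) ^ j))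
      = Real.exp (-(t * c)) * (a i * Real.exp t ^ i) *
          ∑ j ∈ Finset.range (n₂ + 1), b j * Real.exp (2 * t) ^ j := by
    intro i _
    rw [Finset.mul_sum]
    exact Finset.sum_congr rfl fun j _ => by ring
  rw [Finset.sum_congr rfl this, ← Finset.sum_mul, ← Finset.mul_sum]
  have hb1 : ∑ i ∈ Finset.range (n₁ + 1), a i * Real.exp t ^ i
      = (p * Real.exp t + q) ^ n₁ := by
    simpa [hadef, mul_assoc] using binomSum n₁ p q (Real.exp t)
  have hb2 : ∑ j ∈ Finset.range (n₂ + 1), b j * Real.exp (2 * t) ^ j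
      = (p * Real.exp (2 * t) + q) ^ n₂ := by
    simpa [hbdef, mul_assoc] using binomSum n₂ p q (Real.exp (2 * t))
  rw [hb1, hb2]

theorem stmt_17 {Ω : Type*} [MeasurableSpace Ω] (μ : Measure Ω)
    [IsProbabilityMeasure μ] (p : ℝ) (hp0 : 0 < p) (hp1 : p < 1)
    (n₁ n₂ : ℕ) (hn₁ : 0 < n₁) (hn₂ : 0 < n₂)
    (X Z : Ω → ℕ) (hX : Measurable X) (hZ : Measurable Z)
    (hind : IndepFun X Z μ)
    (hXdist : ∀ i : ℕ, μ {ω | X ω = i} =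
      ENNReal.ofReal ((n₁.choose i : ℝ) * p ^ i * (1 - p) ^ (n₁ - i)))
    (hZdist : ∀ i : ℕ, μ {ω | Z ω = i} =
      ENNReal.ofReal ((n₂.choose i : ℝ) * p ^ i * (1 - p) ^ (n₂ - i)))
    (x : ℝ) (hx0 : 0 ≤ x) (hxp : x ≤ p) :
    (μ {ω | ((X ω : ℝ) + 2 * (Z ω : ℝ)) ≤ ((n₁ : ℝ) + 2 * n₂) * x}).toReal ≤
      Real.exp (-(1 / 2) * ((n₁ : ℝ) + 2 * n₂) *
        (x * Real.log (x / p) + (1 - x) * Real.log ((1 - x) / (1 - p)))) := by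
  have hq0 : (0 : ℝ) < 1 - p := by linarith
  have hq1 : (1 : ℝ) - p < 1 := by linarith
  set N : ℝ := (n₁ : ℝ) + 2 * (n₂ : ℝ) with hNdef
  have hN0 : 0 < N := by
    have : (0:ℝ) < (n₁ : ℝ) := by exact_mod_cast hn₁
    have : (0:ℝ) ≤ (n₂ : ℝ) := Nat.cast_nonneg n₂
    simp only [hNdef]; linarith
  rcases eq_or_lt_of_le hx0 with hx0' | hx0'
  · -- x = 0
    subst hx0'
    have hcov : {ω | ((X ω : ℝ) + 2 * (Z ω : ℝ)) ≤ N * 0} ⊆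
        (X ⁻¹' {0} ∩ Z ⁻¹' {0}) := by
      intro ω hω
      simp only [Set.mem_setOf_eq, mul_zero] at hω
      have h1 : (0:ℝ) ≤ (X ω : ℝ) := Nat.cast_nonneg _
      have h2 : (0:ℝ) ≤ (Z ω : ℝ) := Nat.cast_nonneg _
      have hX0 : (X ω : ℝ) = 0 := by linarith
      have hZ0 : (Z ω : ℝ) = 0 := by linarith
      exact ⟨by simpa using Nat.cast_injective (hX0.trans (Nat.cast_zero).symm),
        by simpa using Nat.cast_injective (hZ0.trans (Nat.cast_zero).symm)⟩
    have hmul := hind.measure_inter_preimage_eq_mul {0} {0}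
      (measurableSet_singleton 0) (measurableSet_singleton 0)
    have hXval : μ (X ⁻¹' {0}) = ENNReal.ofReal ((1 - p) ^ n₁) := by
      have := hXdist 0
      rw [show X ⁻¹' {0} = {ω | X ω = 0} from rfl]
      simpa using this
    have hZval : μ (Z ⁻¹' {0}) = ENNReal.ofReal ((1 - p) ^ n₂) := by
      have := hZdist 0
      rw [show Z ⁻¹' {0} = {ω | Z ω = 0} from rfl]
      simpa using this
    have hle : μ {ω | ((X ω : ℝ) + 2 * (Z ω : ℝ)) ≤ N * 0} ≤
        ENNReal.ofReal ((1 - p) ^ n₁ * (1 - p) ^ n₂) := by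
      calc μ {ω | ((X ω : ℝ) + 2 * (Z ω : ℝ)) ≤ N * 0}
          ≤ μ (X ⁻¹' {0} ∩ Z ⁻¹' {0}) := measure_mono hcov
        _ = μ (X ⁻¹' {0}) * μ (Z ⁻¹' {0}) := hmul
        _ = ENNReal.ofReal ((1 - p) ^ n₁ * (1 - p) ^ n₂) := by
            rw [hXval, hZval, ← ENNReal.ofReal_mul (by positivity)]
    refine ENNReal.toReal_le_of_le_ofReal (Real.exp_nonneg _) (hle.trans
      (ENNReal.ofReal_le_ofReal ?_))
    have hlogq : Real.log (1 - p) < 0 := Real.log_neg hq0 hq1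
    have hL0 : (0:ℝ) * Real.log (0 / p) + (1 - 0) * Real.log ((1 - 0) / (1 - p))
        = -Real.log (1 - p) := by
      norm_num [one_div, Real.log_inv]
    rw [hL0]
    have hpow : ∀ n : ℕ, (1 - p) ^ n = Real.exp ((n : ℝ) * Real.log (1 - p)) := fun n => by
      rw [Real.exp_nat_mul, Real.exp_log hq0]
    have hpw : (1 - p) ^ n₁ * (1 - p) ^ n₂ = Real.exp (((n₁ : ℝ) + n₂) * Real.log (1 - p)) := by
      rw [hpow, hpow, ← Real.exp_add]
      ring_nf
    rw [hpw, Real.exp_le_exp]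
    have hcoef : N / 2 ≤ (n₁ : ℝ) + n₂ := by
      have h1 : (0:ℝ) ≤ (n₁ : ℝ) := Nat.cast_nonneg n₁
      simp only [hNdef]; linarith
    nlinarith [mul_le_mul_of_nonpos_right hcoef hlogq.le]
  · -- 0 < x
    have hx1 : x < 1 := lt_of_le_of_lt hxp hp1
    have h1x : 0 < 1 - x := by linarith
    set T : ℝ := Real.log (x * (1 - p) / (p * (1 - x))) with hTdef
    set t : ℝ := T / 2 with htdef
    have harg : 0 < x * (1 - p) / (p * (1 - x)) := by positivity
    have hT0 : T ≤ 0 := by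
      refine Real.log_nonpos harg.le ?_
      rw [div_le_one (by positivity)]
      nlinarith
    have ht0 : t ≤ 0 := by simp only [htdef]; linarith
    have he2t : Real.exp (2 * t) = x * (1 - p) / (p * (1 - x)) := by
      rw [show 2 * t = T by simp [htdef]; ring, hTdef, Real.exp_log harg]
    refine (chernoff_aux μ p hp0 hp1 n₁ n₂ X Z hX hZ hind hXdist hZdist (N * x) t ht0).trans ?_
    set A : ℝ := p * Real.exp t + (1 - p) with hAdef
    set B : ℝ := p * Real.exp (2 * t) + (1 - p) with hBdef
    have hA0 : 0 < A := by positivity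
    have hB0 : 0 < B := by positivity
    have hBval : B = (1 - p) / (1 - x) := by
      rw [hBdef, he2t]
      field_simp
      ring
    have hexpsq : Real.exp t * Real.exp t = Real.exp (2 * t) := by
      rw [← Real.exp_add]; ring_nf
    have hA2B : A ^ 2 ≤ B := by
      simp only [hAdef, hBdef]
      nlinarith [mul_nonneg (mul_nonneg hp0.le hq0.le) (sq_nonneg (Real.exp t - 1)),
        hexpsq, Real.exp_pos t]
    set L : ℝ := x * Real.log (x / p) + (1 - x) * Real.log ((1 - x) / (1 - p)) with hLdef
    have hlogB : Real.log B = T * x - L := by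
      rw [hBval, hTdef, hLdef, Real.log_div (ne_of_gt hq0) (ne_of_gt h1x),
        Real.log_div (by positivity) (by positivity),
        Real.log_mul (by positivity) (by positivity),
        Real.log_mul (by positivity) (by positivity),
        Real.log_div (ne_of_gt hx0') (ne_of_gt hp0),
        Real.log_div (ne_of_gt h1x) (ne_of_gt hq0)]
      ring
    -- squares
    have hlhs0 : 0 ≤ Real.exp (-(t * (N * x))) * A ^ n₁ * B ^ n₂ := by positivity
    have hsq : (Real.exp (-(t * (N * x))) * A ^ n₁ * B ^ n₂) ^ 2 ≤
        (Real.exp (-(1 / 2) * N * L)) ^ 2 := by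
      have e1 : (Real.exp (-(t * (N * x))) * A ^ n₁ * B ^ n₂) ^ 2
          = Real.exp (-(T * (N * x))) * ((A ^ 2) ^ n₁ * (B ^ 2) ^ n₂) := by
        rw [mul_pow, mul_pow, pow_right_comm A, pow_right_comm B, sq (Real.exp _),
          ← Real.exp_add,
          show -(t * (N * x)) + -(t * (N * x)) = -(T * (N * x)) by rw [htdef]; ring,
          mul_assoc]
      have e2 : B ^ n₁ * (B ^ 2) ^ n₂ = Real.exp (N * Real.log B) := by
        rw [← pow_mul, ← pow_add,
          show N = ((n₁ + 2 * n₂ : ℕ) : ℝ) by rw [hNdef]; push_cast; ring,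
          Real.exp_nat_mul, Real.exp_log hB0]
      calc (Real.exp (-(t * (N * x))) * A ^ n₁ * B ^ n₂) ^ 2
          = Real.exp (-(T * (N * x))) * ((A ^ 2) ^ n₁ * (B ^ 2) ^ n₂) := e1
        _ ≤ Real.exp (-(T * (N * x))) * (B ^ n₁ * (B ^ 2) ^ n₂) := by
            refine mul_le_mul_of_nonneg_left ?_ (Real.exp_nonneg _)
            exact mul_le_mul_of_nonneg_right
              (pow_le_pow_left₀ (sq_nonneg A) hA2B n₁) (by positivity)
        _ = Real.exp (-(T * (N * x)) + N * Real.log B) := by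
            rw [e2, ← Real.exp_add]
        _ = Real.exp (-N * L) := by
            rw [hlogB]; congr 1; ring
        _ = (Real.exp (-(1 / 2) * N * L)) ^ 2 := by
            rw [sq, ← Real.exp_add]; congr 1; ring
    calc Real.exp (-(t * (N * x))) * A ^ n₁ * B ^ n₂
        = Real.sqrt ((Real.exp (-(t * (N * x))) * A ^ n₁ * B ^ n₂) ^ 2) :=
          (Real.sqrt_sq hlhs0).symm
      _ ≤ Real.sqrt ((Real.exp (-(1 / 2) * N * L)) ^ 2) := Real.sqrt_le_sqrt hsq
      _ = Real.exp (-(1 / 2) * N * L) := Real.sqrt_sq (Real.exp_nonneg _)
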